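/- arXiv:2105.13875 — 2 statements merged into one kernel-verified Lean document; each statement's English description precedes it below -/
import Mathlib

section
/- The coefficients of the formal power series (−q; q)_∞ · Σ_{n≥0} (−1)^n q^{n(n+1)/2} / (−q; q)_n are all nonnegative, and are strictly positive except for the coefficient of q^1, which is zero. -/
open PowerSeries Finset

/-- `(−q;q)_∞ = Π_{k ≥ 1} (1 + q^k)` as a formal power series over `ℚ`. -/
noncomputable def prodDistinct : PowerSeries ℚ :=
  PowerSeries.mk fun n =>
    coeff n (∏ k ∈ Finset.range (n + 1), (1 + (X : PowerSeries ℚ) ^ (k + 1)))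

/-- `Σ_{n ≥ 0} (−1)^n q^{n(n+1)/2} / (−q;q)_n` as a formal power series over `ℚ`. -/
noncomputable def falseTheta : PowerSeries ℚ :=
  PowerSeries.mk fun N =>
    coeff N (∑ n ∈ Finset.range (N + 2),
      ((-1 : PowerSeries ℚ)) ^ n * (X : PowerSeries ℚ) ^ (n * (n + 1) / 2) *
        (∏ k ∈ Finset.range n, (1 + (X : PowerSeries ℚ) ^ (k + 1)))⁻¹)


/-- finite product `Π_{k∈s} (1+X^k)` -/
noncomputable def Pd (s : Finset ℕ) : PowerSeries ℚ := ∏ k ∈ s, (1 + (X : PowerSeries ℚ) ^ k)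

lemma Pd_range (M : ℕ) :
    (∏ k ∈ Finset.range M, (1 + (X : PowerSeries ℚ) ^ (k + 1))) = Pd (Icc 1 M) := by
  rw [Pd, show Icc 1 M = Ico 1 (M+1) by rfl, Finset.prod_Ico_eq_prod_range]
  simp [add_comm 1]

lemma Pd_coeff_card (s : Finset ℕ) (n : ℕ) :
    (coeff n) (Pd s) = ((s.powerset.filter (fun t => t.sum id = n)).card : ℚ) := by
  rw [Pd]
  have : ∀ k ∈ s, (1 + (X : PowerSeries ℚ)^k) = (X^k + 1) := fun k _ => add_comm _ _
  rw [Finset.prod_congr rfl this, Finset.prod_add]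
  simp only [Finset.prod_const_one, mul_one]
  rw [map_sum, ← Finset.sum_boole]
  apply Finset.sum_congr rfl
  intro t _
  rw [Finset.prod_pow_eq_pow_sum t (fun i => i) X, PowerSeries.coeff_X_pow]
  simp [id, eq_comm]

lemma coeff_zero_of_dvd {n : ℕ} {f : PowerSeries ℚ} (h : (X : PowerSeries ℚ)^(n+1) ∣ f) :
    coeff n f = 0 :=
  PowerSeries.X_pow_dvd_iff.mp h n (Nat.lt_succ_self n)

lemma Pd_sub_one_dvd {n : ℕ} {s : Finset ℕ} (h : ∀ k ∈ s, n < k) :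
    (X : PowerSeries ℚ)^(n+1) ∣ (Pd s - 1) := by
  classical
  induction s using Finset.induction_on with
  | empty => simp [Pd]
  | @insert a s' hm ih =>
    have hd : (X : PowerSeries ℚ)^(n+1) ∣ (Pd s' - 1) := ih (fun k hk => h k (Finset.mem_insert_of_mem hk))
    have hna : n < a := h a (Finset.mem_insert_self a s')
    have hXa : (X : PowerSeries ℚ)^(n+1) ∣ X^a := pow_dvd_pow _ hna
    rw [Pd, Finset.prod_insert hm, ← Pd]
    have : (1 + (X:PowerSeries ℚ)^a) * Pd s' - 1 = (Pd s' - 1) + X^a * Pd s' := by ring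
    rw [this]
    exact dvd_add hd (hXa.mul_right _)

lemma Pd_const (s : Finset ℕ) (h : 0 ∉ s) : constantCoeff (Pd s) = 1 := by
  rw [Pd, map_prod]
  apply Finset.prod_eq_one
  intro k hk
  have : k ≠ 0 := fun hk0 => h (hk0 ▸ hk)
  simp [PowerSeries.constantCoeff_X, zero_pow this]

/-- stability of coefficients -/
lemma Pd_coeff_stable {i a b : ℕ} (hia : i < a) (hab : a ≤ b) :
    coeff i (Pd (Icc 1 a)) = coeff i (Pd (Icc 1 b)) := by
  have hu : Icc 1 b = Icc 1 a ∪ Icc (a+1) b := by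
    ext x; simp only [Finset.mem_Icc, Finset.mem_union]; omega
  have hdisj : Disjoint (Icc 1 a) (Icc (a+1) b) := by
    rw [Finset.disjoint_left]; intro x hx hx'
    simp only [Finset.mem_Icc] at hx hx'; omega
  have : Pd (Icc 1 b) = Pd (Icc 1 a) * Pd (Icc (a+1) b) := by
    rw [Pd, hu, Finset.prod_union hdisj]; rfl
  rw [this]
  obtain ⟨g, hg⟩ := Pd_sub_one_dvd (n := i) (s := Icc (a+1) b)
    (fun k hk => by simp only [Finset.mem_Icc] at hk; omega)
  have hPd : Pd (Icc (a+1) b) = 1 + X^(i+1) * g := by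
    rw [← hg]; ring
  rw [hPd, mul_add, mul_one, map_add]
  have : coeff i (Pd (Icc 1 a) * (X^(i+1) * g)) = 0 := by
    apply coeff_zero_of_dvd
    exact Dvd.dvd.mul_left (Dvd.intro g rfl) _
  rw [this, add_zero]



section basics
lemma sum_Icc_id (m : ℕ) : (Icc 1 m).sum id = m * (m+1) / 2 := by
  induction m with
  | zero => simp
  | succ m ih =>
    rw [Finset.sum_Icc_succ_top (by omega), ih]
    have h2 : 2 ∣ m * (m+1) := even_iff_two_dvd.mp (Nat.even_mul_succ_self m)
    have h3 : 2 ∣ (m+1) * (m+1+1) := even_iff_two_dvd.mp (Nat.even_mul_succ_self (m+1))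
    have h4 : (m+1) * (m+1+1) = m * (m+1) + 2 * (m+1) := by ring
    simp only [id]
    omega

lemma tri_ge (m : ℕ) : m ≤ m * (m+1) / 2 := by
  rw [Nat.le_div_iff_mul_le (by norm_num)]
  cases m with
  | zero => simp
  | succ k => exact Nat.mul_le_mul le_rfl (by omega)

lemma alt_sum (k : ℕ) : (∑ m ∈ Finset.range k, ((-1:ℚ))^m) = if Even k then 0 else 1 := by
  induction k with
  | zero => simp
  | succ k ih =>
    rw [Finset.sum_range_succ, ih]
    rcases Nat.even_or_odd k with h | h
    · simp [h, Even.neg_one_pow h, Nat.even_add_one, h]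
    · simp [Nat.not_even_iff_odd.mpr h, Odd.neg_one_pow h, Nat.even_add_one]
end basics

noncomputable def Gser (n : ℕ) : PowerSeries ℚ :=
  ∑ m ∈ Finset.range (n + 2),
    ((-1 : PowerSeries ℚ)) ^ m * (X : PowerSeries ℚ) ^ (m * (m + 1) / 2) *
      (∏ k ∈ Finset.range m, (1 + (X : PowerSeries ℚ) ^ (k + 1)))⁻¹

lemma coeff_neg_one_pow_mul (m n : ℕ) (f : PowerSeries ℚ) :
    coeff n (((-1 : PowerSeries ℚ)) ^ m * f) = (-1 : ℚ) ^ m * coeff n f := by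
  have h : ((-1 : PowerSeries ℚ)) ^ m = C ((-1 : ℚ) ^ m) := by
    rw [map_pow, map_neg, map_one]
  rw [h, PowerSeries.coeff_C_mul]

lemma stepA1 (n i : ℕ) (hi : i ≤ n) :
    coeff i prodDistinct = coeff i (Pd (Icc 1 (n + 1))) := by
  rw [prodDistinct, coeff_mk, Pd_range]
  exact Pd_coeff_stable (Nat.lt_succ_self i) (by omega)

lemma stepA2 (n j : ℕ) (hj : j ≤ n) :
    coeff j falseTheta = coeff j (Gser n) := by
  rw [falseTheta, coeff_mk, Gser, map_sum, map_sum]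
  apply Finset.sum_subset (Finset.range_subset_range.mpr (by omega))
  intro m _ hm
  rw [Finset.mem_range, not_lt] at hm
  apply coeff_zero_of_dvd
  have h1 : j + 1 ≤ m * (m + 1) / 2 := le_trans (by omega) (tri_ge m)
  have h2 : (X : PowerSeries ℚ) ^ (j + 1) ∣ X ^ (m * (m + 1) / 2) := pow_dvd_pow _ h1
  exact h2.trans ⟨((-1 : PowerSeries ℚ)) ^ m *
    (∏ k ∈ Finset.range m, (1 + (X : PowerSeries ℚ) ^ (k + 1)))⁻¹, by ring⟩

lemma stepA (n : ℕ) :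
    coeff n (prodDistinct * falseTheta) = coeff n (Pd (Icc 1 (n + 1)) * Gser n) := by
  rw [PowerSeries.coeff_mul, PowerSeries.coeff_mul]
  apply Finset.sum_congr rfl
  intro p hp
  rw [Finset.HasAntidiagonal.mem_antidiagonal] at hp
  rw [stepA1 n p.1 (by omega), stepA2 n p.2 (by omega)]

lemma stepB (n : ℕ) :
    coeff n (Pd (Icc 1 (n + 1)) * Gser n) =
      ∑ m ∈ Finset.range (n + 2), (-1 : ℚ) ^ m *
        coeff n ((X : PowerSeries ℚ) ^ (m * (m + 1) / 2) * Pd (Icc (m + 1) (n + 1))) := by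
  rw [Gser, Finset.mul_sum, map_sum]
  apply Finset.sum_congr rfl
  intro m hm
  rw [Finset.mem_range] at hm
  have hsplit : Pd (Icc 1 (n + 1)) = Pd (Icc 1 m) * Pd (Icc (m + 1) (n + 1)) := by
    rw [Pd, Pd, Pd, ← Finset.prod_union]
    · congr 1
      ext x
      simp only [Finset.mem_Icc, Finset.mem_union]
      omega
    · rw [Finset.disjoint_left]
      intro x hx hx'
      simp only [Finset.mem_Icc] at hx hx'
      omega
  have hinv : Pd (Icc 1 m) * (Pd (Icc 1 m))⁻¹ = 1 := by
    apply PowerSeries.mul_inv_cancel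
    rw [Pd_const _ (by simp)]
    norm_num
  rw [Pd_range]
  have : Pd (Icc 1 (n + 1)) *
      (((-1 : PowerSeries ℚ)) ^ m * (X : PowerSeries ℚ) ^ (m * (m + 1) / 2) *
        (Pd (Icc 1 m))⁻¹) =
      ((-1 : PowerSeries ℚ)) ^ m * ((X : PowerSeries ℚ) ^ (m * (m + 1) / 2) *
        ((Pd (Icc 1 m) * (Pd (Icc 1 m))⁻¹) * Pd (Icc (m + 1) (n + 1)))) := by
    rw [hsplit]; ring
  rw [this, hinv, one_mul, coeff_neg_one_pow_mul]

/-- the set of partitions of `n` into distinct parts -/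
def Dset (n : ℕ) : Finset (Finset ℕ) :=
  (Icc 1 (n + 1)).powerset.filter (fun u => u.sum id = n)

lemma stepC (n m : ℕ) (hm : m ≤ n + 1) :
    coeff n ((X : PowerSeries ℚ) ^ (m * (m + 1) / 2) * Pd (Icc (m + 1) (n + 1))) =
      (((Dset n).filter (fun u => Icc 1 m ⊆ u)).card : ℚ) := by
  set T := m * (m + 1) / 2 with hT
  by_cases hTn : T ≤ n
  · have h1 : coeff n ((X : PowerSeries ℚ) ^ T * Pd (Icc (m + 1) (n + 1))) =
        coeff (n - T) (Pd (Icc (m + 1) (n + 1))) := by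
      calc coeff n ((X : PowerSeries ℚ) ^ T * Pd (Icc (m + 1) (n + 1)))
          = coeff ((n - T) + T) ((X : PowerSeries ℚ) ^ T * Pd (Icc (m + 1) (n + 1))) := by
            rw [Nat.sub_add_cancel hTn]
        _ = coeff (n - T) (Pd (Icc (m + 1) (n + 1))) := PowerSeries.coeff_X_pow_mul _ _ _
    rw [h1, Pd_coeff_card]
    congr 1
    apply Finset.card_bij' (fun t _ => t ∪ Icc 1 m) (fun u _ => u \ Icc 1 m)
    · -- hi
      intro t ht
      rw [Finset.mem_filter, Finset.mem_powerset] at ht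
      obtain ⟨hts, hsum⟩ := ht
      have hdisj : Disjoint t (Icc 1 m) := by
        rw [Finset.disjoint_left]
        intro x hx hx'
        have := hts hx
        simp only [Finset.mem_Icc] at this hx'
        omega
      rw [Finset.mem_filter, Dset, Finset.mem_filter, Finset.mem_powerset]
      refine ⟨⟨Finset.union_subset (fun x hx => ?_) (fun x hx => ?_), ?_⟩, ?_⟩
      · have := hts hx; simp only [Finset.mem_Icc] at this ⊢; omega
      · simp only [Finset.mem_Icc] at hx ⊢; omega
      · rw [Finset.sum_union hdisj, hsum, sum_Icc_id, ← hT]; omega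
      · exact Finset.subset_union_right
    · -- hj
      intro u hu
      rw [Finset.mem_filter, Dset, Finset.mem_filter, Finset.mem_powerset] at hu
      obtain ⟨⟨hus, hsum⟩, hsub⟩ := hu
      rw [Finset.mem_filter, Finset.mem_powerset]
      constructor
      · intro x hx
        rw [Finset.mem_sdiff] at hx
        have h2 := hus hx.1
        have h3 := hx.2
        simp only [Finset.mem_Icc] at h2 h3 ⊢
        omega
      · have hsd : (u \ Icc 1 m).sum id + (Icc 1 m).sum id = u.sum id :=
          Finset.sum_sdiff hsub
        rw [sum_Icc_id] at hsd
        omega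
    · -- left inverse
      intro t ht
      rw [Finset.mem_filter, Finset.mem_powerset] at ht
      ext x
      simp only [Finset.mem_sdiff, Finset.mem_union]
      constructor
      · rintro ⟨hx | hx, hns⟩
        · exact hx
        · exact absurd hx hns
      · intro hx
        refine ⟨Or.inl hx, fun h => ?_⟩
        have := ht.1 hx
        simp only [Finset.mem_Icc] at this h
        omega
    · -- right inverse
      intro u hu
      rw [Finset.mem_filter] at hu
      exact Finset.sdiff_union_of_subset hu.2
  · -- T > n : both sides are zero
    have hL : coeff n ((X : PowerSeries ℚ) ^ T * Pd (Icc (m + 1) (n + 1))) = 0 := by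
      apply coeff_zero_of_dvd
      exact (pow_dvd_pow (X : PowerSeries ℚ) (by omega : n + 1 ≤ T)).trans
        (dvd_mul_right _ _)
    have hR : ((Dset n).filter (fun u => Icc 1 m ⊆ u)) = ∅ := by
      rw [Finset.filter_eq_empty_iff]
      intro u hu hsub
      rw [Dset, Finset.mem_filter] at hu
      have := Finset.sum_le_sum_of_subset (f := id) hsub
      rw [hu.2, sum_Icc_id, ← hT] at this
      omega
    rw [hL, hR]
    simp

/-- length of the initial staircase `1,2,…,s` contained in `u` -/
def stair (n : ℕ) (u : Finset ℕ) : ℕ := Nat.findGreatest (fun m => Icc 1 m ⊆ u) (n + 1)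

lemma stair_subset (n : ℕ) (u : Finset ℕ) : Icc 1 (stair n u) ⊆ u :=
  Nat.findGreatest_spec (P := fun m => Icc 1 m ⊆ u) (Nat.zero_le (n + 1))
    (show Icc 1 0 ⊆ u by
      rw [Finset.Icc_eq_empty (by omega : ¬ (1:ℕ) ≤ 0)]; exact Finset.empty_subset u)

lemma stair_le (n : ℕ) (u : Finset ℕ) : stair n u ≤ n + 1 := Nat.findGreatest_le _

lemma mainEq (n : ℕ) :
    coeff n (prodDistinct * falseTheta) =
      ∑ u ∈ Dset n, (if Even (stair n u) then (1 : ℚ) else 0) := by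
  rw [stepA, stepB]
  have hC : ∀ m ∈ Finset.range (n + 2), (-1 : ℚ) ^ m *
      coeff n ((X : PowerSeries ℚ) ^ (m * (m + 1) / 2) * Pd (Icc (m + 1) (n + 1))) =
      ∑ u ∈ Dset n, (if Icc 1 m ⊆ u then (-1 : ℚ) ^ m else 0) := by
    intro m hm
    rw [Finset.mem_range] at hm
    rw [stepC n m (by omega), ← Finset.sum_boole, Finset.mul_sum]
    apply Finset.sum_congr rfl
    intro u _
    by_cases h : Icc 1 m ⊆ u <;> simp [h]
  rw [Finset.sum_congr rfl hC, Finset.sum_comm]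
  apply Finset.sum_congr rfl
  intro u hu
  have key : ∀ m, m ≤ n + 1 → (Icc 1 m ⊆ u ↔ m ≤ stair n u) := by
    intro m hm
    constructor
    · intro h
      exact Nat.le_findGreatest hm h
    · intro h
      exact (Finset.Icc_subset_Icc_right h).trans (stair_subset n u)
  have h1 : (∑ m ∈ Finset.range (n + 2), if Icc 1 m ⊆ u then (-1 : ℚ) ^ m else 0) =
      ∑ m ∈ Finset.range (stair n u + 1), (-1 : ℚ) ^ m := by
    have hsub : Finset.range (stair n u + 1) ⊆ Finset.range (n + 2) :=
      Finset.range_subset_range.mpr (by have := stair_le n u; omega)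
    have hvan : ∀ m ∈ Finset.range (n + 2), m ∉ Finset.range (stair n u + 1) →
        (if Icc 1 m ⊆ u then (-1 : ℚ) ^ m else 0) = 0 := by
      intro m hm hm'
      rw [Finset.mem_range] at hm hm'
      rw [if_neg]
      intro h
      have := (key m (by omega)).mp h
      omega
    rw [← Finset.sum_subset hsub hvan]
    apply Finset.sum_congr rfl
    intro m hm
    rw [Finset.mem_range] at hm
    have hms : m ≤ stair n u := by omega
    rw [if_pos ((key m (le_trans hms (stair_le n u))).mpr hms)]
  rw [h1, alt_sum]
  rcases Nat.even_or_odd (stair n u) with h | h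
  · simp [h, Nat.even_add_one]
  · simp [h, Nat.even_add_one, Nat.not_even_iff_odd.mpr h]

lemma term_nonneg (n : ℕ) (u : Finset ℕ) :
    (0 : ℚ) ≤ if Even (stair n u) then (1 : ℚ) else 0 := by
  split <;> norm_num

/-- The coefficients of `(−q;q)_∞ · Σ_{n≥0} (−1)^n q^{n(n+1)/2}/(−q;q)_n` are all
nonnegative, strictly positive except the coefficient of `q^1`, which vanishes. -/
theorem stmt_9 :
    (∀ n : ℕ, 0 ≤ coeff n (prodDistinct * falseTheta)) ∧
      (∀ n : ℕ, n ≠ 1 → 0 < coeff n (prodDistinct * falseTheta)) ∧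
      coeff 1 (prodDistinct * falseTheta) = 0 := by
  refine ⟨fun n => ?_, fun n hn => ?_, ?_⟩
  · rw [mainEq]
    exact Finset.sum_nonneg (fun u _ => term_nonneg n u)
  · rw [mainEq]
    apply Finset.sum_pos' (fun u _ => term_nonneg n u)
    -- witness
    rcases Nat.eq_zero_or_pos n with h0 | hpos
    · subst h0
      refine ⟨∅, ?_, ?_⟩
      · rw [Dset, Finset.mem_filter, Finset.mem_powerset]
        exact ⟨Finset.empty_subset _, by simp⟩
      · have hs : stair 0 (∅ : Finset ℕ) = 0 := by
          rw [stair]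
          apply Nat.findGreatest_eq_zero_iff.mpr
          intro m hm _ hsub
          have : (1 : ℕ) ∈ Icc 1 m := by rw [Finset.mem_Icc]; omega
          exact absurd (hsub this) (Finset.notMem_empty 1)
        rw [hs]
        norm_num
    · have h2 : 2 ≤ n := by omega
      refine ⟨{n}, ?_, ?_⟩
      · rw [Dset, Finset.mem_filter, Finset.mem_powerset]
        constructor
        · intro x hx
          rw [Finset.mem_singleton] at hx
          rw [Finset.mem_Icc]
          omega
        · simp
      · have hs : stair n ({n} : Finset ℕ) = 0 := by
          rw [stair]
          apply Nat.findGreatest_eq_zero_iff.mpr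
          intro m hm _ hsub
          have h1 : (1 : ℕ) ∈ Icc 1 m := by rw [Finset.mem_Icc]; omega
          have := hsub h1
          rw [Finset.mem_singleton] at this
          omega
        rw [hs]
        norm_num
  · rw [mainEq]
    have hD : Dset 1 = {({1} : Finset ℕ)} := by decide
    rw [hD, Finset.sum_singleton]
    have hs : stair 1 ({1} : Finset ℕ) = 1 := by decide
    rw [hs]
    norm_num
end

section
/- The double generating function for distinct-parts partitions by minimal excludant satisfies Σ_{n,m} p_d^{mex}(m,n) z^m q^n = (−q; q)_∞ · Σ_{m≥1} z^m q^{m(m−1)/2} / (−q; q)_m, as a formal power series identity in z and q. -/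
open PowerSeries Finset

/-- The set of partitions of `n` into distinct parts, encoded as finsets of
positive integers summing to `n`. -/
def Dpart (n : ℕ) : Finset (Finset ℕ) :=
  (Finset.Icc 1 n).powerset.filter (fun S => S.sum id = n)

/-- The minimal excludant: the least positive integer not occurring as a part. -/
noncomputable def pmex (S : Finset ℕ) : ℕ := sInf {m : ℕ | 0 < m ∧ m ∉ S}

/-- `p_d^{mex}(m, n)`: the number of distinct-parts partitions of `n` with minimal
excludant `m`. -/
noncomputable def pdmexCount (m n : ℕ) : ℕ := ((Dpart n).filter (fun S => pmex S = m)).card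

lemma pmex_set_nonempty (S : Finset ℕ) : {m : ℕ | 0 < m ∧ m ∉ S}.Nonempty := by
  refine ⟨S.sup id + 1, Nat.succ_pos _, fun h => ?_⟩
  have := Finset.le_sup (f := id) h
  simp only [id] at this
  omega

lemma pmex_pos (S : Finset ℕ) : 0 < pmex S :=
  (Nat.sInf_mem (pmex_set_nonempty S)).1

lemma pmex_eq_iff {S : Finset ℕ} {m : ℕ} (hm : 0 < m) :
    pmex S = m ↔ m ∉ S ∧ ∀ k, 0 < k → k < m → k ∈ S := by
  have hrfl : sInf {x : ℕ | 0 < x ∧ x ∉ S} = pmex S := rfl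
  constructor
  · intro hmex
    have h1 := Nat.sInf_mem (pmex_set_nonempty S)
    rw [hrfl, hmex] at h1
    refine ⟨h1.2, fun k hk hkm => ?_⟩
    by_contra hkS
    have h2 := Nat.sInf_le (show k ∈ {x : ℕ | 0 < x ∧ x ∉ S} from ⟨hk, hkS⟩)
    rw [hrfl, hmex] at h2
    omega
  · rintro ⟨h1, h2⟩
    have hle := Nat.sInf_le (show m ∈ {x : ℕ | 0 < x ∧ x ∉ S} from ⟨hm, h1⟩)
    rw [hrfl] at hle
    refine le_antisymm hle ?_
    by_contra h
    push_neg at h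
    have hmem := Nat.sInf_mem (pmex_set_nonempty S)
    rw [hrfl] at hmem
    exact hmem.2 (h2 _ hmem.1 h)

lemma mem_Dpart {n : ℕ} {S : Finset ℕ} :
    S ∈ Dpart n ↔ (∀ x ∈ S, 0 < x) ∧ S.sum id = n := by
  simp only [Dpart, mem_filter, mem_powerset]
  constructor
  · rintro ⟨hsub, hsum⟩
    exact ⟨fun x hx => (mem_Icc.1 (hsub hx)).1, hsum⟩
  · rintro ⟨hpos, hsum⟩
    refine ⟨fun x hx => mem_Icc.2 ⟨hpos x hx, ?_⟩, hsum⟩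
    calc x = id x := rfl
    _ ≤ S.sum id := Finset.single_le_sum (fun i _ => Nat.zero_le _) hx
    _ = n := hsum

lemma sum_Icc_pred (m : ℕ) : (Finset.Icc 1 (m - 1)).sum id = m * (m - 1) / 2 := by
  rcases Nat.eq_zero_or_pos m with rfl | hm
  · simp
  · have hr : Finset.range m = insert 0 (Finset.Icc 1 (m - 1)) := by
      ext x; simp only [mem_range, mem_insert, mem_Icc]; omega
    have h2 := Finset.sum_range_id_mul_two m
    rw [hr, Finset.sum_insert (by simp)] at h2
    simp only [zero_add] at h2
    simp only [id_eq]
    omega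

lemma prod_one_add_eq (s : Finset ℕ) :
    (∏ k ∈ s, (1 + (X : PowerSeries ℚ) ^ k)) = ∑ t ∈ s.powerset, X ^ (t.sum id) := by
  have : ∀ k ∈ s, (1 + (X : PowerSeries ℚ) ^ k) = X ^ k + 1 := fun k _ => add_comm _ _
  rw [Finset.prod_congr rfl this, Finset.prod_add]
  refine Finset.sum_congr rfl fun t _ => ?_
  rw [Finset.prod_const_one, mul_one, Finset.prod_pow_eq_pow_sum]
  rfl

lemma coeff_sum_X_pow (n : ℕ) (P : Finset (Finset ℕ)) :
    coeff n (∑ t ∈ P, (X : PowerSeries ℚ) ^ (t.sum id)) =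
      ((P.filter fun t => t.sum id = n).card : ℚ) := by
  rw [map_sum]
  simp only [coeff_X_pow]
  rw [Finset.sum_boole]
  congr 2
  ext t
  simp only [Finset.mem_filter]
  rw [eq_comm]

lemma range_image (m : ℕ) : Finset.Icc 1 m = (Finset.range m).image (· + 1) := by
  ext x; simp only [mem_Icc, mem_image, mem_range]; constructor
  · rintro ⟨h1, h2⟩; exact ⟨x - 1, by omega, by omega⟩
  · rintro ⟨y, hy, rfl⟩; omega

lemma prod_range_one_add (m : ℕ) :
    (∏ k ∈ Finset.range m, (1 + (X : PowerSeries ℚ) ^ (k + 1))) =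
      ∑ t ∈ (Finset.Icc 1 m).powerset, (X : PowerSeries ℚ) ^ (t.sum id) := by
  rw [← prod_one_add_eq, range_image, Finset.prod_image (fun a _ b _ h => by omega)]

lemma coeff_prodDistinct (n : ℕ) : coeff n prodDistinct = ((Dpart n).card : ℚ) := by
  rw [prodDistinct, coeff_mk, prod_range_one_add, coeff_sum_X_pow]
  congr 2
  ext t
  simp only [Dpart, mem_filter, mem_powerset]
  constructor
  · rintro ⟨hsub, hsum⟩
    refine ⟨fun x hx => mem_Icc.2 ⟨(mem_Icc.1 (hsub hx)).1, ?_⟩, hsum⟩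
    calc x = id x := rfl
    _ ≤ t.sum id := Finset.single_le_sum (fun i _ => Nat.zero_le _) hx
    _ = n := hsum
  · rintro ⟨hsub, hsum⟩
    exact ⟨fun x hx => mem_Icc.2 ⟨(mem_Icc.1 (hsub hx)).1, le_trans (mem_Icc.1 (hsub hx)).2 (Nat.le_succ n)⟩, hsum⟩

section Key

variable (m : ℕ)

/-- helper facts about a set with mex `m` -/
lemma mex_facts {S : Finset ℕ} (hm : 0 < m) (hpos : ∀ x ∈ S, 0 < x) (hmex : pmex S = m) :
    Finset.Icc 1 (m - 1) ⊆ S ∧ m ∉ S ∧ ∀ z ∈ S \ Finset.Icc 1 (m - 1), m < z := by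
  obtain ⟨hmS, hlow⟩ := (pmex_eq_iff hm).1 hmex
  have hsub : Finset.Icc 1 (m - 1) ⊆ S := fun k hk => by
    have := mem_Icc.1 hk; exact hlow k (by omega) (by omega)
  refine ⟨hsub, hmS, fun z hz => ?_⟩
  have h1 := mem_sdiff.1 hz
  have h2 := hpos z h1.1
  have h3 : z ∉ Finset.Icc 1 (m - 1) := h1.2
  rw [mem_Icc] at h3
  have : z ≠ m := fun e => hmS (e ▸ h1.1)
  omega

lemma key_card (hm : 0 < m) (n : ℕ) :
    ∑ p ∈ Finset.HasAntidiagonal.antidiagonal n,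
      pdmexCount m p.1 * ((Finset.Icc 1 m).powerset.filter fun A => A.sum id = p.2).card =
    if m * (m - 1) / 2 ≤ n then (Dpart (n - m * (m - 1) / 2)).card else 0 := by
  set T := m * (m - 1) / 2 with hTdef
  clear_value T
  have hT : (Finset.Icc 1 (m - 1)).sum id = T := by rw [hTdef]; exact sum_Icc_pred m
  set F : ℕ → Finset (Finset ℕ) := fun i => (Dpart i).filter (fun S => pmex S = m) with hF
  set G : ℕ → Finset (Finset ℕ) := fun j => (Finset.Icc 1 m).powerset.filter (fun A => A.sum id = j) with hG
  -- lower bound on sums of members of F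
  have hFsum : ∀ i, ∀ S ∈ F i, T ≤ i ∧ S.sum id = i ∧ (∀ x ∈ S, 0 < x) ∧ pmex S = m := by
    intro i S hS
    rw [hF, mem_filter, mem_Dpart] at hS
    obtain ⟨⟨hpos, hsum⟩, hmex⟩ := hS
    obtain ⟨hsub, -, -⟩ := mex_facts m hm hpos hmex
    refine ⟨?_, hsum, hpos, hmex⟩
    calc T = (Finset.Icc 1 (m - 1)).sum id := hT.symm
    _ ≤ S.sum id := Finset.sum_le_sum_of_subset hsub
    _ = i := hsum
  by_cases hTn : T ≤ n
  swap
  · rw [if_neg hTn]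
    refine Finset.sum_eq_zero fun p hp => ?_
    have hp1 : p.1 ≤ n := by
      have := Finset.HasAntidiagonal.mem_antidiagonal.1 hp; omega
    have hFe : F p.1 = ∅ := by
      rw [Finset.eq_empty_iff_forall_notMem]
      intro S hS
      have := (hFsum p.1 S hS).1
      omega
    have hz : pdmexCount m p.1 = 0 := by
      have hr2 : (Dpart p.1).filter (fun S => pmex S = m) = F p.1 := rfl
      rw [pdmexCount, hr2, hFe, Finset.card_empty]
    rw [hz, zero_mul]
  rw [if_pos hTn]
  have hstep : ∀ p ∈ Finset.HasAntidiagonal.antidiagonal n,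
      pdmexCount m p.1 * ((Finset.Icc 1 m).powerset.filter fun A => A.sum id = p.2).card
        = (F p.1 ×ˢ G p.2).card := fun p _ => by
    rw [Finset.card_product]; rfl
  rw [Finset.sum_congr rfl hstep, ← Finset.card_sigma]
  refine Finset.card_bij (fun x _ => x.2.2 ∪ (x.2.1 \ Finset.Icc 1 (m - 1))) ?_ ?_ ?_
  · -- maps into Dpart (n - T)
    rintro ⟨p, S, A⟩ hx
    rw [Finset.mem_sigma, Finset.mem_product] at hx
    obtain ⟨hpmem, hSF, hAG⟩ := hx
    obtain ⟨hTp, hSsum, hSpos, hmex⟩ := hFsum p.1 S hSF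
    rw [hG, mem_filter, mem_powerset] at hAG
    obtain ⟨hAsub, hAsum⟩ := hAG
    obtain ⟨hsub, hmS, hbig⟩ := mex_facts m hm hSpos hmex
    have hpn : p.1 + p.2 = n := Finset.HasAntidiagonal.mem_antidiagonal.1 hpmem
    have hdisj : Disjoint A (S \ Finset.Icc 1 (m - 1)) := by
      rw [Finset.disjoint_left]
      intro z hzA hzS
      have h1 := (mem_Icc.1 (hAsub hzA)).2
      have := hbig z hzS
      omega
    rw [mem_Dpart]
    constructor
    · intro x hx
      rcases Finset.mem_union.1 hx with h | h
      · exact (mem_Icc.1 (hAsub h)).1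
      · exact hSpos x (mem_sdiff.1 h).1
    · rw [Finset.sum_union hdisj]
      have h2 : (S \ Finset.Icc 1 (m - 1)).sum id + T = p.1 := by
        rw [← hT, Finset.sum_sdiff hsub, hSsum]
      have h3 : A.sum id = p.2 := hAsum
      show A.sum id + (S \ Finset.Icc 1 (m - 1)).sum id = n - T
      omega
  · -- injective
    rintro ⟨p, S, A⟩ hx ⟨q, S', A'⟩ hy heq
    rw [Finset.mem_sigma, Finset.mem_product] at hx hy
    obtain ⟨hpmem, hSF, hAG⟩ := hx
    obtain ⟨hqmem, hSF', hAG'⟩ := hy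
    obtain ⟨hTp, hSsum, hSpos, hmex⟩ := hFsum p.1 S hSF
    obtain ⟨hTq, hSsum', hSpos', hmex'⟩ := hFsum q.1 S' hSF'
    rw [hG, mem_filter, mem_powerset] at hAG hAG'
    obtain ⟨hAsub, hAsum⟩ := hAG
    obtain ⟨hAsub', hAsum'⟩ := hAG'
    obtain ⟨hsub, hmS, hbig⟩ := mex_facts m hm hSpos hmex
    obtain ⟨hsub', hmS', hbig'⟩ := mex_facts m hm hSpos' hmex'
    have heq' : A ∪ (S \ Finset.Icc 1 (m - 1)) = A' ∪ (S' \ Finset.Icc 1 (m - 1)) := heq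
    -- recover A and S from the union
    have recA : ∀ (S₀ A₀ : Finset ℕ), A₀ ⊆ Finset.Icc 1 m →
        (∀ z ∈ S₀ \ Finset.Icc 1 (m - 1), m < z) →
        (A₀ ∪ (S₀ \ Finset.Icc 1 (m - 1))).filter (· ≤ m) = A₀ := by
      intro S₀ A₀ hA₀ hb
      ext z
      simp only [Finset.mem_filter, Finset.mem_union]
      constructor
      · rintro ⟨h | h, hzm⟩
        · exact h
        · exact absurd (hb z h) (by omega)
      · intro h
        exact ⟨Or.inl h, (mem_Icc.1 (hA₀ h)).2⟩
    have recS : ∀ (S₀ A₀ : Finset ℕ), A₀ ⊆ Finset.Icc 1 m →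
        Finset.Icc 1 (m - 1) ⊆ S₀ →
        (∀ z ∈ S₀ \ Finset.Icc 1 (m - 1), m < z) →
        ((A₀ ∪ (S₀ \ Finset.Icc 1 (m - 1))).filter (fun z => m < z)) ∪ Finset.Icc 1 (m - 1) = S₀ := by
      intro S₀ A₀ hA₀ hs hb
      ext z
      simp only [Finset.mem_union, Finset.mem_filter, Finset.mem_union, Finset.mem_sdiff]
      constructor
      · rintro (⟨h | ⟨h, -⟩, hzm⟩ | h)
        · exact absurd (mem_Icc.1 (hA₀ h)).2 (by omega)
        · exact h
        · exact hs h
      · intro h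
        by_cases hz : z ∈ Finset.Icc 1 (m - 1)
        · exact Or.inr hz
        · exact Or.inl ⟨Or.inr ⟨h, hz⟩, hb z (mem_sdiff.2 ⟨h, hz⟩)⟩
    have hA : A = A' := by
      rw [← recA S A hAsub hbig, ← recA S' A' hAsub' hbig', heq']
    have hS : S = S' := by
      rw [← recS S A hAsub hsub hbig, ← recS S' A' hAsub' hsub' hbig', heq']
    have hp1 : p.1 = q.1 := by rw [← hSsum, ← hSsum', hS]
    have hpq : p = q := by
      have h1 : p.1 + p.2 = n := Finset.HasAntidiagonal.mem_antidiagonal.1 hpmem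
      have h2 : q.1 + q.2 = n := Finset.HasAntidiagonal.mem_antidiagonal.1 hqmem
      have h3 : p.2 = q.2 := by omega
      exact Prod.ext hp1 h3
    subst hpq
    rw [hS, hA]
  · -- surjective
    intro b hb
    rw [mem_Dpart] at hb
    obtain ⟨hbpos, hbsum⟩ := hb
    set A : Finset ℕ := b.filter (· ≤ m) with hA
    set Sb : Finset ℕ := b.filter (fun z => ¬ z ≤ m) with hSb
    set S : Finset ℕ := Sb ∪ Finset.Icc 1 (m - 1) with hS
    have hdisj : Disjoint Sb (Finset.Icc 1 (m - 1)) := by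
      rw [Finset.disjoint_left]
      intro z hz hz'
      have := (Finset.mem_filter.1 hz).2
      have := (mem_Icc.1 hz').2
      omega
    have hSsum : S.sum id = Sb.sum id + T := by
      rw [hS, Finset.sum_union hdisj, hT]
    have hABsum : A.sum id + Sb.sum id = n - T := by
      rw [hA, hSb, Finset.sum_filter_add_sum_filter_not, hbsum]
    refine ⟨⟨(S.sum id, A.sum id), S, A⟩, ?_, ?_⟩
    · rw [Finset.mem_sigma, Finset.mem_product]
      refine ⟨Finset.HasAntidiagonal.mem_antidiagonal.2 (by simp only; omega), ?_, ?_⟩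
      · rw [hF, mem_filter, mem_Dpart]
        refine ⟨⟨?_, rfl⟩, ?_⟩
        · intro x hx
          rcases Finset.mem_union.1 hx with h | h
          · exact hbpos x (Finset.mem_filter.1 h).1
          · exact (mem_Icc.1 h).1
        · rw [pmex_eq_iff hm]
          constructor
          · intro hmem
            rcases Finset.mem_union.1 hmem with h | h
            · exact (Finset.mem_filter.1 h).2 le_rfl
            · have := (mem_Icc.1 h).2; omega
          · intro k hk hkm
            exact Finset.mem_union_right _ (mem_Icc.2 ⟨hk, by omega⟩)
      · rw [hG, mem_filter, mem_powerset]
        refine ⟨fun z hz => ?_, rfl⟩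
        have h1 := Finset.mem_filter.1 hz
        exact mem_Icc.2 ⟨hbpos z h1.1, h1.2⟩
    · -- the map sends this back to b
      show A ∪ (S \ Finset.Icc 1 (m - 1)) = b
      have hSd : S \ Finset.Icc 1 (m - 1) = Sb := by
        rw [hS, Finset.union_sdiff_right, Finset.sdiff_eq_self_iff_disjoint.2 hdisj]
      rw [hSd, hA, hSb, Finset.filter_union_filter_not_eq]

end Key

lemma key (m : ℕ) (hm : 0 < m) :
    (PowerSeries.mk fun n => (pdmexCount m n : ℚ)) *
        ∏ k ∈ Finset.range m, (1 + (X : PowerSeries ℚ) ^ (k + 1))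
      = prodDistinct * X ^ (m * (m - 1) / 2) := by
  ext n
  rw [coeff_mul_X_pow', coeff_mul]
  simp only [coeff_mk, prod_range_one_add, coeff_sum_X_pow, coeff_prodDistinct]
  exact_mod_cast key_card m hm n

lemma pdmexCount_zero (n : ℕ) : pdmexCount 0 n = 0 := by
  rw [pdmexCount, Finset.card_eq_zero, Finset.filter_eq_empty_iff]
  exact fun {S} _ h => (pmex_pos S).ne' h

/-- `Σ_{n,m} p_d^{mex}(m,n) z^m q^n = (−q;q)_∞ Σ_{m≥1} z^m q^{m(m−1)/2}/(−q;q)_m`,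
as power series in `z` whose coefficients are power series in `q`. -/
theorem stmt_14 :
    (PowerSeries.mk fun m => PowerSeries.mk fun n => (pdmexCount m n : ℚ)) =
      (PowerSeries.C prodDistinct) *
        (PowerSeries.mk fun m =>
          if m = 0 then 0 else
            (X : PowerSeries ℚ) ^ (m * (m - 1) / 2) *
              (∏ k ∈ Finset.range m, (1 + (X : PowerSeries ℚ) ^ (k + 1)))⁻¹) := by
  apply PowerSeries.ext
  intro m
  rw [coeff_mk, PowerSeries.coeff_C_mul, coeff_mk]
  rcases Nat.eq_zero_or_pos m with rfl | hm
  · rw [if_pos rfl, mul_zero]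
    apply PowerSeries.ext
    intro n
    simp [pdmexCount_zero]
  · rw [if_neg hm.ne', ← mul_assoc]
    have hP : constantCoeff (∏ k ∈ Finset.range m, (1 + (X : PowerSeries ℚ) ^ (k + 1))) ≠ 0 := by
      rw [map_prod]
      simp
    rw [PowerSeries.eq_mul_inv_iff_mul_eq hP]
    exact key m hm
end
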